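/- The Benders subproblem is always feasible and bounded: for any ȳ, v̄ : I → ℝ with ȳ_i ≥ 0 and v̄_i ≥ 0 for all i ∈ I, the all-zero tuple (x, ρ, τ, π, σ) = (0, 0, 0, 0, 0) is subproblem-feasible for (ȳ, v̄), and every subproblem-feasible tuple for (ȳ, v̄) has coverage Z(x, τ, π) ≤ ∑_{j ∈ J} d_j; consequently 0 ≤ φ'(ȳ, v̄) ≤ ∑_{j ∈ J} d_j. -/
import Mathlib


/-- A tuple `(x, ρ, τ, π, σ)` is subproblem-feasible for master solution
`(ȳ, v̄)` of the Benders decomposition. -/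
def SubFeasible {I J : Type*} [Fintype I] [Fintype J]
    (d dhat : J → ℝ) (Γ : ℕ) (cov : J → Finset I) (ybar vbar : I → ℝ)
    (x : I → J → ℝ) (ρ : I → ℝ) (τ : ℝ) (π : J → ℝ) (σ : I → J → ℝ) : Prop :=
  (∀ i j, 0 ≤ x i j) ∧ (∀ i, 0 ≤ ρ i) ∧ 0 ≤ τ ∧ (∀ j, 0 ≤ π j) ∧
  (∀ i j, 0 ≤ σ i j) ∧
  (∀ i j, i ∉ cov j → x i j = 0) ∧
  (∀ i, ∑ j, d j * x i j + (Γ : ℝ) * ρ i + ∑ j, σ i j ≤ vbar i) ∧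
  (∀ j, ∑ i, dhat j * x i j ≤ τ + π j) ∧
  (∀ i j, dhat j * x i j ≤ σ i j + ρ i) ∧
  (∀ j, ∑ i, x i j ≤ 1) ∧
  (∀ j, ∀ i ∈ cov j, x i j ≤ ybar i)

/-- The coverage `Z(x, τ, π)` achieved by a subproblem tuple. -/
def coverage {I J : Type*} [Fintype I] [Fintype J]
    (d : J → ℝ) (Γ : ℕ) (x : I → J → ℝ) (τ : ℝ) (π : J → ℝ) : ℝ :=
  ∑ i, ∑ j, d j * x i j - (Γ : ℝ) * τ - ∑ j, π j

/-- The Benders subproblem value `φ'(ȳ, v̄)`: the supremum of the coverage over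
all subproblem-feasible tuples for `(ȳ, v̄)`. -/
noncomputable def phi' {I J : Type*} [Fintype I] [Fintype J]
    (d dhat : J → ℝ) (Γ : ℕ) (cov : J → Finset I) (ybar vbar : I → ℝ) : ℝ :=
  sSup {t : ℝ | ∃ x ρ τ π σ,
    SubFeasible d dhat Γ cov ybar vbar x ρ τ π σ ∧ t = coverage d Γ x τ π}

/-- The Benders subproblem is always feasible and bounded: the all-zero tuple is
subproblem-feasible, every subproblem-feasible tuple has coverage at most
`∑ j, d j`, and consequently `0 ≤ φ'(ȳ, v̄) ≤ ∑ j, d j`. -/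
theorem benders_subproblem_feasible_bounded {I J : Type*}
    [Fintype I] [Nonempty I] [Fintype J] [Nonempty J]
    (d dhat : J → ℝ) (hd : ∀ j, 0 ≤ d j) (hdhat : ∀ j, 0 ≤ dhat j)
    (Γ : ℕ) (cov : J → Finset I)
    (ybar vbar : I → ℝ) (hybar : ∀ i, 0 ≤ ybar i) (hvbar : ∀ i, 0 ≤ vbar i) :
    SubFeasible d dhat Γ cov ybar vbar (fun _ _ => 0) (fun _ => 0) 0
        (fun _ => 0) (fun _ _ => 0) ∧
    (∀ x ρ τ π σ, SubFeasible d dhat Γ cov ybar vbar x ρ τ π σ →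
      coverage d Γ x τ π ≤ ∑ j, d j) ∧
    0 ≤ phi' d dhat Γ cov ybar vbar ∧ phi' d dhat Γ cov ybar vbar ≤ ∑ j, d j := by
  have hfeas : SubFeasible d dhat Γ cov ybar vbar (fun _ _ => 0) (fun _ => 0) 0
      (fun _ => 0) (fun _ _ => 0) := by
    refine ⟨fun _ _ => le_refl 0, fun _ => le_refl 0, le_refl 0, fun _ => le_refl 0,
      fun _ _ => le_refl 0, fun _ _ _ => rfl, fun i => ?_, fun j => ?_,
      fun i j => ?_, fun j => ?_, fun j i _ => hybar i⟩ <;> simp [hvbar]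
  have hbd : ∀ x ρ τ π σ, SubFeasible d dhat Γ cov ybar vbar x ρ τ π σ →
      coverage d Γ x τ π ≤ ∑ j, d j := by
    intro x ρ τ π σ ⟨hx, hρ, hτ, hπ, hσ, _, _, _, _, hsum, _⟩
    have h1 : ∑ i, ∑ j, d j * x i j ≤ ∑ j, d j := by
      rw [Finset.sum_comm]
      refine Finset.sum_le_sum fun j _ => ?_
      rw [← Finset.mul_sum]
      calc d j * ∑ i, x i j ≤ d j * 1 := by
            exact mul_le_mul_of_nonneg_left (hsum j) (hd j)
        _ = d j := mul_one _
    have h2 : 0 ≤ (Γ : ℝ) * τ := mul_nonneg (Nat.cast_nonneg _) hτ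
    have h3 : 0 ≤ ∑ j, π j := Finset.sum_nonneg fun j _ => hπ j
    unfold coverage; linarith
  have hzero : (0 : ℝ) ∈ {t : ℝ | ∃ x ρ τ π σ,
      SubFeasible d dhat Γ cov ybar vbar x ρ τ π σ ∧ t = coverage d Γ x τ π} := by
    exact ⟨_, _, _, _, _, hfeas, by simp [coverage]⟩
  have hub : ∀ t ∈ {t : ℝ | ∃ x ρ τ π σ,
      SubFeasible d dhat Γ cov ybar vbar x ρ τ π σ ∧ t = coverage d Γ x τ π},
      t ≤ ∑ j, d j := by
    rintro t ⟨x, ρ, τ, π, σ, hf, rfl⟩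
    exact hbd x ρ τ π σ hf
  refine ⟨hfeas, hbd, ?_, ?_⟩
  · exact le_csSup ⟨∑ j, d j, hub⟩ hzero
  · exact Real.sSup_le hub (Finset.sum_nonneg fun j _ => hd j)
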